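/- The discrete homogeneous powers satisfy the raising relation C_h^± H_s^± = H_{s+1}^± for every s ∈ ℕ and each sign choice, where (C_h^± f)(m) = Σ_{i=1}^n (m_i h) e_i f(m ∓ ε_i) is the discrete analogue of multiplication by the vector variable. -/

import Mathlib

open Finset

noncomputable section

/-- The quadratic form on `ℝⁿ` whose Clifford algebra is `Cl_{0,n}`:
`Q(x) = −(x₁² + ⋯ + xₙ²)`, so that the generators satisfy `eᵢeⱼ + eⱼeᵢ = −2δᵢⱼ`. -/
def negQ (n : ℕ) : QuadraticForm ℝ (Fin n → ℝ) :=
  QuadraticMap.weightedSumSquares ℝ (fun _ : Fin n => (-1 : ℝ))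

/-- The Clifford algebra `Cl_{0,n}`. -/
abbrev Cl (n : ℕ) := CliffordAlgebra (negQ n)

/-- The generators `e i` of `Cl_{0,n}`. -/
def eCl (n : ℕ) (i : Fin n) : Cl n := CliffordAlgebra.ι (negQ n) (Pi.single i 1)

/-- `1` for the forward (upper sign) choice, `-1` for the backward one. -/
def sgn (σ : Bool) : ℝ := if σ then 1 else -1

/-- Forward/backward difference `∂_h^{±i}` of a lattice function with values in a real module. -/
def fdiff {n : ℕ} {A : Type*} [AddCommGroup A] [Module ℝ A] (σ : Bool) (h : ℝ) (i : Fin n)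
    (f : (Fin n → ℤ) → A) : (Fin n → ℤ) → A := fun m =>
  if σ then h⁻¹ • (f (m + Pi.single i 1) - f m) else h⁻¹ • (f m - f (m - Pi.single i 1))

/-- `m ∓ εᵢ` (upper sign paired with the forward difference). -/
def shiftB {n : ℕ} (σ : Bool) (i : Fin n) (m : Fin n → ℤ) : Fin n → ℤ :=
  if σ then m - Pi.single i 1 else m + Pi.single i 1

/-- One-dimensional factorial power `(x)_∓^{(s)} = ∏_{k=0}^{s-1} (x ∓ k h)`
(upper sign paired with the forward difference `σ = true`). -/
def factPow (σ : Bool) (h x : ℝ) (s : ℕ) : ℝ :=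
  ∏ k ∈ range s, (x - sgn σ * k * h)

/-- Multi-index factorial power `(mh)_∓^{(α)}`. -/
def mfp {n : ℕ} (σ : Bool) (h : ℝ) (m : Fin n → ℤ) (α : Fin n → ℕ) : ℝ :=
  ∏ i, factPow σ h (m i * h) (α i)

/-- The difference Dirac operator `D_h^± = Σᵢ eᵢ ∂_h^{±i}`. -/
def Dirac (n : ℕ) (σ : Bool) (h : ℝ) (f : (Fin n → ℤ) → Cl n) : (Fin n → ℤ) → Cl n :=
  fun m => ∑ i, eCl n i * fdiff σ h i f m

/-- The Clifford vector `mh = Σᵢ (mᵢ h) eᵢ`. -/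
def vecCl (n : ℕ) (h : ℝ) (m : Fin n → ℤ) : Cl n := ∑ i, ((m i : ℝ) * h) • eCl n i

/-- The difference Euler operator `(E_h^± f)(m) = Σᵢ (mᵢ h) (∂_h^{±i} f)(m ∓ εᵢ)`. -/
def Euler (n : ℕ) (σ : Bool) (h : ℝ) (f : (Fin n → ℤ) → Cl n) : (Fin n → ℤ) → Cl n :=
  fun m => ∑ i, ((m i : ℝ) * h) • fdiff σ h i f (shiftB σ i m)

/-- The second-order operator `(A_h^± f)(m) = ∓ h Σᵢ (mᵢ h) (∂_h^{±i} ∂_h^{∓i} f)(m)`. -/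
def Aop (n : ℕ) (σ : Bool) (h : ℝ) (f : (Fin n → ℤ) → Cl n) : (Fin n → ℤ) → Cl n :=
  fun m => (-(sgn σ) * h) • ∑ i, ((m i : ℝ) * h) • fdiff σ h i (fdiff (!σ) h i f) m

/-- `L_{jk}^± f = (mⱼ h) ∂_h^{±k} f − (m_k h) ∂_h^{±j} f`. -/
def Lop (n : ℕ) (σ : Bool) (h : ℝ) (j k : Fin n) (f : (Fin n → ℤ) → Cl n) :
    (Fin n → ℤ) → Cl n :=
  fun m => ((m j : ℝ) * h) • fdiff σ h k f m - ((m k : ℝ) * h) • fdiff σ h j f m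

/-- The difference Gamma operator `Γ_h^± f = −Σ_{j<k} eⱼ e_k L_{jk}^± f − A_h^± f`. -/
def Gamma (n : ℕ) (σ : Bool) (h : ℝ) (f : (Fin n → ℤ) → Cl n) : (Fin n → ℤ) → Cl n :=
  fun m => -(∑ j, ∑ k, if j < k then eCl n j * eCl n k * Lop n σ h j k f m else 0)
    - Aop n σ h f m

/-- `B_h^± = ±h Σᵢ ∂_h^{±i}`. -/
def Bop (n : ℕ) (σ : Bool) (h : ℝ) (f : (Fin n → ℤ) → Cl n) : (Fin n → ℤ) → Cl n :=
  fun m => (sgn σ * h) • ∑ i, fdiff σ h i f m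

/-- `(C_h^± f)(m) = Σᵢ (mᵢ h) eᵢ f(m ∓ εᵢ)`. -/
def Cop (n : ℕ) (σ : Bool) (h : ℝ) (f : (Fin n → ℤ) → Cl n) : (Fin n → ℤ) → Cl n :=
  fun m => ∑ i, ((m i : ℝ) * h) • (eCl n i * f (shiftB σ i m))

/-- `V_{h,r}^± = r I + E_h^± − A_h^± + (1/2) B_h^±`. -/
def Vop (n : ℕ) (σ : Bool) (h r : ℝ) (f : (Fin n → ℤ) → Cl n) : (Fin n → ℤ) → Cl n :=
  fun m => r • f m + Euler n σ h f m - Aop n σ h f m + (1/2 : ℝ) • Bop n σ h f m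

/-- `Π_k^±`: the real span of the lattice functions `m ↦ (mh)_∓^{(α)} a` with `|α| ≤ k`. -/
def PiLe (n : ℕ) (σ : Bool) (h : ℝ) (k : ℕ) : Submodule ℝ ((Fin n → ℤ) → Cl n) :=
  Submodule.span ℝ {f | ∃ (α : Fin n → ℕ) (a : Cl n),
    (∑ i, α i) ≤ k ∧ f = fun m => mfp σ h m α • a}

/-- The space of homogeneous discrete polynomials of degree exactly `k`:
the real span of the lattice functions `m ↦ (mh)_∓^{(α)} a` with `|α| = k`. -/
def PiEq (n : ℕ) (σ : Bool) (h : ℝ) (k : ℕ) : Submodule ℝ ((Fin n → ℤ) → Cl n) :=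
  Submodule.span ℝ {f | ∃ (α : Fin n → ℕ) (a : Cl n),
    (∑ i, α i) = k ∧ f = fun m => mfp σ h m α • a}

/-- The discrete homogeneous powers `H_s^±`:
`H_{2k}^±(m) = Σ_{|α|=k} ((−1)^k k!/α!) (mh)_∓^{(2α)}` and
`H_{2k+1}^±(m) = Σ_{|α|=k} Σᵢ ((−1)^k k!/α!) (mh)_∓^{(2α+εᵢ)} eᵢ`. -/
def Hpow (n : ℕ) (σ : Bool) (h : ℝ) (s : ℕ) : (Fin n → ℤ) → Cl n := fun m =>
  if s % 2 = 0 then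
    ∑ α ∈ Finset.Nat.antidiagonalTuple n (s / 2),
      (((-1 : ℝ) ^ (s / 2) * (Nat.factorial (s / 2) : ℝ) / (∏ i, (Nat.factorial (α i) : ℝ)))
          * mfp σ h m (fun j => 2 * α j)) • (1 : Cl n)
  else
    ∑ α ∈ Finset.Nat.antidiagonalTuple n (s / 2), ∑ i,
      (((-1 : ℝ) ^ (s / 2) * (Nat.factorial (s / 2) : ℝ) / (∏ j, (Nat.factorial (α j) : ℝ)))
          * mfp σ h m (fun j => 2 * α j + if j = i then 1 else 0)) • eCl n i

lemma negQ_single (n : ℕ) (i : Fin n) : negQ n (Pi.single i 1) = -1 := by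
  simp [negQ, QuadraticMap.weightedSumSquares_apply, Pi.single_apply, ite_mul, mul_ite,
    Finset.sum_ite_eq']

lemma eCl_mul_self (n : ℕ) (i : Fin n) : eCl n i * eCl n i = -1 := by
  rw [eCl, CliffordAlgebra.ι_sq_scalar, negQ_single]
  simp

lemma eCl_anticomm (n : ℕ) {i j : Fin n} (hij : i ≠ j) :
    eCl n i * eCl n j = -(eCl n j * eCl n i) := by
  have h0 : QuadraticMap.polar (negQ n) (Pi.single i 1) (Pi.single j 1) = 0 := by
    simp only [QuadraticMap.polar, negQ, QuadraticMap.weightedSumSquares_apply, smul_eq_mul,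
      Pi.add_apply]
    rw [← Finset.sum_sub_distrib, ← Finset.sum_sub_distrib]
    apply Finset.sum_eq_zero
    intro x _
    rcases eq_or_ne x i with rfl | hxi <;> rcases eq_or_ne x j with rfl | hxj <;>
      simp_all [Pi.single_apply] <;> ring
  have := CliffordAlgebra.ι_mul_ι_add_swap (Q := negQ n) (Pi.single i 1) (Pi.single j 1)
  rw [h0] at this
  simp only [map_zero] at this
  rw [eCl, eCl]
  linear_combination (norm := module) this
lemma shiftB_self {n : ℕ} (σ : Bool) (i : Fin n) (m : Fin n → ℤ) (h : ℝ) :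
    ((shiftB σ i m i : ℤ) : ℝ) * h = (m i : ℝ) * h - sgn σ * h := by
  cases σ <;> simp [shiftB, sgn, Pi.single_apply] <;> push_cast <;> ring

lemma shiftB_ne {n : ℕ} (σ : Bool) {i j : Fin n} (m : Fin n → ℤ) (hj : j ≠ i) :
    shiftB σ i m j = m j := by
  cases σ <;> simp [shiftB, Pi.single_apply, hj]

lemma factPow_succ' (σ : Bool) (h x : ℝ) (s : ℕ) :
    x * factPow σ h (x - sgn σ * h) s = factPow σ h x (s + 1) := by
  rw [factPow, factPow, Finset.prod_range_succ']
  simp only [Nat.cast_zero]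
  rw [mul_comm]
  congr 1
  · apply Finset.prod_congr rfl
    intro k _
    push_cast
    ring
  · ring

lemma mfp_shift {n : ℕ} (σ : Bool) (h : ℝ) (m : Fin n → ℤ) (i : Fin n) (α : Fin n → ℕ) :
    ((m i : ℝ) * h) * mfp σ h (shiftB σ i m) α
      = mfp σ h m (fun j => α j + if j = i then 1 else 0) := by
  rw [mfp, mfp, ← Finset.mul_prod_erase _ _ (Finset.mem_univ i),
    ← Finset.mul_prod_erase _ _ (Finset.mem_univ i), ← mul_assoc]
  congr 1
  · simp only [if_pos rfl]
    rw [shiftB_self]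
    exact factPow_succ' σ h _ _
  · apply Finset.prod_congr rfl
    intro j hj
    have hj' : j ≠ i := Finset.ne_of_mem_erase hj
    rw [shiftB_ne σ m hj', if_neg hj', Nat.add_zero]
lemma sum_AT_succ {M : Type*} [AddCommMonoid M] {n : ℕ} (k : ℕ) (i : Fin n)
    (F : (Fin n → ℕ) → M) :
    ∑ α ∈ Finset.Nat.antidiagonalTuple n k, F (fun l => α l + if l = i then 1 else 0)
      = ∑ β ∈ (Finset.Nat.antidiagonalTuple n (k+1)).filter (fun β => β i ≠ 0), F β := by
  apply Finset.sum_bij' (i := fun α _ => fun l => α l + if l = i then 1 else 0)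
    (j := fun β _ => fun l => β l - if l = i then 1 else 0)
  case hi =>
    intro α hα
    rw [Finset.Nat.mem_antidiagonalTuple] at hα
    rw [Finset.mem_filter, Finset.Nat.mem_antidiagonalTuple]
    constructor
    · rw [Finset.sum_add_distrib, hα, Finset.sum_ite_eq' Finset.univ i (fun _ => 1)]
      simp
    · simp
  case hj =>
    intro β hβ
    rw [Finset.mem_filter, Finset.Nat.mem_antidiagonalTuple] at hβ
    obtain ⟨hsum, hne⟩ := hβ
    rw [Finset.Nat.mem_antidiagonalTuple]
    have e1 : ∑ l, (β l - if l = i then 1 else 0)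
        = ∑ l ∈ Finset.univ.erase i, β l + (β i - 1) := by
      rw [← Finset.sum_erase_add _ _ (Finset.mem_univ i), if_pos rfl]
      congr 1
      apply Finset.sum_congr rfl
      intro l hl
      rw [if_neg (Finset.ne_of_mem_erase hl), Nat.sub_zero]
    have e2 : ∑ l ∈ Finset.univ.erase i, β l + β i = k + 1 := by
      rw [Finset.sum_erase_add _ _ (Finset.mem_univ i)]; exact hsum
    omega
  case left_neg =>
    intro α _
    funext l
    rcases eq_or_ne l i with rfl | hl <;> simp [*]
  case right_neg =>
    intro β hβ
    rw [Finset.mem_filter] at hβ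
    funext l
    rcases eq_or_ne l i with rfl | hl
    · have hb : β l ≠ 0 := hβ.2
      simp only [if_pos rfl]
      simp only [if_true, eq_self_iff_true]
      omega
    · simp [hl]
  case h =>
    intro α _
    rfl

lemma prod_factorial_succ {n : ℕ} (α : Fin n → ℕ) (i : Fin n) :
    ∏ l, ((Nat.factorial (α l + if l = i then 1 else 0)) : ℝ)
      = (α i + 1) * ∏ l, (Nat.factorial (α l) : ℝ) := by
  rw [← Finset.mul_prod_erase _ _ (Finset.mem_univ i),
    ← Finset.mul_prod_erase _ (fun l => (Nat.factorial (α l) : ℝ)) (Finset.mem_univ i),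
    ← mul_assoc]
  congr 1
  · rw [if_pos rfl, Nat.factorial_succ]
    push_cast
    ring
  · apply Finset.prod_congr rfl
    intro l hl
    rw [if_neg (Finset.ne_of_mem_erase hl), Nat.add_zero]

lemma prod_factorial_ne_zero {n : ℕ} (α : Fin n → ℕ) :
    (∏ l, (Nat.factorial (α l) : ℝ)) ≠ 0 := by
  apply Finset.prod_ne_zero_iff.mpr
  intro l _
  exact_mod_cast (Nat.factorial_pos (α l)).ne'
lemma sum_antisymm {n : ℕ} {M : Type*} [AddCommGroup M] [Module ℝ M]
    (g : Fin n → Fin n → ℝ) (hg : ∀ i j, g i j = g j i)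
    (E : Fin n → Fin n → M) (hE : ∀ i j, i ≠ j → E i j = -E j i) :
    ∑ i, ∑ j, g i j • E i j = ∑ i, g i i • E i i := by
  have key : (∑ i, ∑ j, if i = j then (0 : M) else g i j • E i j) = 0 := by
    set S := ∑ i, ∑ j, if i = j then (0 : M) else g i j • E i j with hS
    have hneg : S = -S := by
      conv_lhs => rw [hS, Finset.sum_comm]
      rw [← Finset.sum_neg_distrib]
      apply Finset.sum_congr rfl
      intro i _
      rw [← Finset.sum_neg_distrib]
      apply Finset.sum_congr rfl
      intro j _
      rcases eq_or_ne j i with rfl | hji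
      · simp
      · rw [if_neg hji, if_neg (Ne.symm hji), hg j i, hE j i hji]
        simp
    have h2 : (2 : ℝ) • S = 0 := by
      rw [two_smul]
      nth_rewrite 1 [hneg]
      simp
    have := smul_eq_zero.mp h2
    simpa using this
  calc ∑ i, ∑ j, g i j • E i j
      = (∑ i, ∑ j, if i = j then (0 : M) else g i j • E i j)
        + ∑ i, ∑ j, (if i = j then g i i • E i i else 0) := by
        rw [← Finset.sum_add_distrib]
        apply Finset.sum_congr rfl
        intro i _
        rw [← Finset.sum_add_distrib]
        apply Finset.sum_congr rfl
        intro j _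
        rcases eq_or_ne i j with rfl | hij
        · simp
        · simp [hij]
    _ = ∑ i, g i i • E i i := by
        rw [key, zero_add]
        apply Finset.sum_congr rfl
        intro i _
        simp
lemma Hpow_even (n : ℕ) (σ : Bool) (h : ℝ) (k : ℕ) :
    Hpow n σ h (2 * k) = fun m =>
      ∑ α ∈ Finset.Nat.antidiagonalTuple n k,
        (((-1 : ℝ) ^ k * (Nat.factorial k : ℝ) / (∏ i, (Nat.factorial (α i) : ℝ)))
            * mfp σ h m (fun j => 2 * α j)) • (1 : Cl n) := by
  have h1 : (2 * k) % 2 = 0 := by omega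
  have h2 : (2 * k) / 2 = k := by omega
  funext m
  rw [Hpow, if_pos h1, h2]

lemma Hpow_odd (n : ℕ) (σ : Bool) (h : ℝ) (k : ℕ) :
    Hpow n σ h (2 * k + 1) = fun m =>
      ∑ α ∈ Finset.Nat.antidiagonalTuple n k, ∑ i,
        (((-1 : ℝ) ^ k * (Nat.factorial k : ℝ) / (∏ j, (Nat.factorial (α j) : ℝ)))
            * mfp σ h m (fun j => 2 * α j + if j = i then 1 else 0)) • eCl n i := by
  have h1 : ¬((2 * k + 1) % 2 = 0) := by omega
  have h2 : (2 * k + 1) / 2 = k := by omega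
  funext m
  rw [Hpow, if_neg h1, h2]
/-- The raising relation `C_h^± H_s^± = H_{s+1}^±` for the discrete homogeneous powers. -/
theorem Cop_Hpow (n : ℕ) (hn : 1 ≤ n) (h : ℝ) (hh : 0 < h) (σ : Bool) (s : ℕ) :
    Cop n σ h (Hpow n σ h s) = Hpow n σ h (s + 1) := by
  funext m
  obtain ⟨k, rfl | rfl⟩ := Nat.even_or_odd' s
  · -- even case
    rw [Hpow_odd]
    simp only [Cop, Hpow_even, Finset.mul_sum, mul_smul_comm, mul_one, Finset.smul_sum,
      smul_smul]
    rw [Finset.sum_comm]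
    refine Finset.sum_congr rfl fun α _ => Finset.sum_congr rfl fun i _ => ?_
    congr 1
    rw [mul_left_comm]
    congr 1
    exact mfp_shift σ h m i (fun j => 2 * α j)
  · -- odd case
    have e2 : 2 * k + 1 + 1 = 2 * (k + 1) := by ring
    rw [e2, Hpow_even]
    simp only [Cop, Hpow_odd]
    calc
      ∑ i, ((m i : ℝ) * h) • (eCl n i * ∑ α ∈ Finset.Nat.antidiagonalTuple n k, ∑ j,
          (((-1 : ℝ) ^ k * (Nat.factorial k : ℝ) / ∏ l, (Nat.factorial (α l) : ℝ))
            * mfp σ h (shiftB σ i m) (fun l => 2 * α l + if l = j then 1 else 0)) • eCl n j)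
        = ∑ α ∈ Finset.Nat.antidiagonalTuple n k, ∑ i, ∑ j,
          (((-1 : ℝ) ^ k * (Nat.factorial k : ℝ) / ∏ l, (Nat.factorial (α l) : ℝ))
            * mfp σ h m (fun l => (2 * α l + if l = j then 1 else 0)
                + if l = i then 1 else 0)) • (eCl n i * eCl n j) := by
          simp only [Finset.mul_sum, mul_smul_comm, Finset.smul_sum, smul_smul]
          rw [Finset.sum_comm]
          refine Finset.sum_congr rfl fun α _ => Finset.sum_congr rfl fun i _ =>
            Finset.sum_congr rfl fun j _ => ?_
          congr 1
          rw [mul_left_comm]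
          congr 1
          exact mfp_shift σ h m i (fun l => 2 * α l + if l = j then 1 else 0)
      _ = ∑ α ∈ Finset.Nat.antidiagonalTuple n k, ∑ i,
          (((-1 : ℝ) ^ k * (Nat.factorial k : ℝ) / ∏ l, (Nat.factorial (α l) : ℝ))
            * mfp σ h m (fun l => (2 * α l + if l = i then 1 else 0)
                + if l = i then 1 else 0)) • (eCl n i * eCl n i) := by
          refine Finset.sum_congr rfl fun α _ => ?_
          exact sum_antisymm
            (fun i j => ((-1 : ℝ) ^ k * (Nat.factorial k : ℝ) / ∏ l, (Nat.factorial (α l) : ℝ))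
              * mfp σ h m (fun l => (2 * α l + if l = j then 1 else 0)
                  + if l = i then 1 else 0))
            (fun i j => by
              have hf : (fun l => (2 * α l + if l = j then 1 else 0) + if l = i then 1 else 0)
                  = (fun l => (2 * α l + if l = i then 1 else 0) + if l = j then 1 else 0) := by
                funext l; ring
              rw [hf])
            (fun i j => eCl n i * eCl n j)
            (fun i j hij => eCl_anticomm n hij)
      _ = ∑ i, ∑ α ∈ Finset.Nat.antidiagonalTuple n k,
          (-(((-1 : ℝ) ^ k * (Nat.factorial k : ℝ) / ∏ l, (Nat.factorial (α l) : ℝ))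
            * mfp σ h m (fun l => 2 * (α l + if l = i then 1 else 0)))) • (1 : Cl n) := by
          rw [Finset.sum_comm]
          refine Finset.sum_congr rfl fun i _ => Finset.sum_congr rfl fun α _ => ?_
          have hf : (fun l => (2 * α l + if l = i then 1 else 0) + if l = i then 1 else 0)
              = (fun l => 2 * (α l + if l = i then 1 else 0)) := by
            funext l; ring
          rw [hf, eCl_mul_self, smul_neg, neg_smul]
      _ = ∑ i : Fin n, ∑ β ∈ Finset.Nat.antidiagonalTuple n (k + 1),
          (-((-1 : ℝ) ^ k * (Nat.factorial k : ℝ) * (β i : ℝ)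
              / ∏ l, (Nat.factorial (β l) : ℝ))
            * mfp σ h m (fun l => 2 * β l)) • (1 : Cl n) := by
          refine Finset.sum_congr rfl fun i _ => ?_
          calc
            ∑ α ∈ Finset.Nat.antidiagonalTuple n k,
                (-(((-1 : ℝ) ^ k * (Nat.factorial k : ℝ) / ∏ l, (Nat.factorial (α l) : ℝ))
                  * mfp σ h m (fun l => 2 * (α l + if l = i then 1 else 0)))) • (1 : Cl n)
              = ∑ α ∈ Finset.Nat.antidiagonalTuple n k,
                (-((-1 : ℝ) ^ k * (Nat.factorial k : ℝ)
                    * (((α i + if i = i then 1 else 0 : ℕ)) : ℝ)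
                    / ∏ l, (Nat.factorial (α l + if l = i then 1 else 0) : ℝ))
                  * mfp σ h m (fun l => 2 * (α l + if l = i then 1 else 0))) • (1 : Cl n) := by
                refine Finset.sum_congr rfl fun α _ => ?_
                congr 1
                rw [if_pos rfl, prod_factorial_succ]
                have h1 := prod_factorial_ne_zero α
                have h2 : ((α i : ℝ) + 1) ≠ 0 := by positivity
                push_cast
                field_simp
            _ = ∑ β ∈ (Finset.Nat.antidiagonalTuple n (k + 1)).filter (fun β => β i ≠ 0),
                (-((-1 : ℝ) ^ k * (Nat.factorial k : ℝ) * (β i : ℝ)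
                    / ∏ l, (Nat.factorial (β l) : ℝ))
                  * mfp σ h m (fun l => 2 * β l)) • (1 : Cl n) :=
                sum_AT_succ k i (fun β =>
                  (-((-1 : ℝ) ^ k * (Nat.factorial k : ℝ) * (β i : ℝ)
                      / ∏ l, (Nat.factorial (β l) : ℝ))
                    * mfp σ h m (fun l => 2 * β l)) • (1 : Cl n))
            _ = ∑ β ∈ Finset.Nat.antidiagonalTuple n (k + 1),
                (-((-1 : ℝ) ^ k * (Nat.factorial k : ℝ) * (β i : ℝ)
                    / ∏ l, (Nat.factorial (β l) : ℝ))
                  * mfp σ h m (fun l => 2 * β l)) • (1 : Cl n) := by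
                apply Finset.sum_filter_of_ne
                intro β _ hne
                intro hzero
                apply hne
                rw [hzero]
                simp
      _ = ∑ β ∈ Finset.Nat.antidiagonalTuple n (k + 1),
          (((-1 : ℝ) ^ (k + 1) * (Nat.factorial (k + 1) : ℝ)
              / ∏ l, (Nat.factorial (β l) : ℝ))
            * mfp σ h m (fun l => 2 * β l)) • (1 : Cl n) := by
          rw [Finset.sum_comm]
          refine Finset.sum_congr rfl fun β hβ => ?_
          rw [Finset.Nat.mem_antidiagonalTuple] at hβ
          rw [← Finset.sum_smul]
          congr 1
          have hsum : (∑ i, ((β i : ℕ) : ℝ)) = ((k + 1 : ℕ) : ℝ) := by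
            exact_mod_cast hβ
          calc
            ∑ i, -((-1 : ℝ) ^ k * (Nat.factorial k : ℝ) * (β i : ℝ)
                  / ∏ l, (Nat.factorial (β l) : ℝ))
                * mfp σ h m (fun l => 2 * β l)
              = (∑ i, ((β i : ℕ) : ℝ)) * (-((-1 : ℝ) ^ k * (Nat.factorial k : ℝ)
                  / ∏ l, (Nat.factorial (β l) : ℝ)) * mfp σ h m (fun l => 2 * β l)) := by
                rw [Finset.sum_mul]
                exact Finset.sum_congr rfl fun i _ => by ring
            _ = _ := by
                rw [hsum]
                push_cast [Nat.factorial_succ]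
                ring
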